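/- Let σ = (λ₁,...,λ₅) be real with λ₁ ≥ λ₂ ≥ λ₃ ≥ λ₄ ≥ λ₅ ≥ -λ₁, e₁(σ) ≥ 0, λ₃ > e₁(σ), and suppose Q_σ(e₁(σ)/2) = 0, where Q_σ(z) = 2z³ - 2(λ₃+λ₅)z² - (e₂(σ)+(λ₃-λ₅)²)z + e₃(σ) + e₁(σ)(λ₃²+λ₅²). Then λ₁ - λ₂ - λ₃ + λ₄ - λ₅ > 0. -/
import Mathlib


/-- `Q_σ(z)` from the paper. -/
def Qpoly (l1 l2 l3 l4 l5 z : ℝ) : ℝ :=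
  2*z^3 - 2*(l3 + l5)*z^2
    - ((l1*l2+l1*l3+l1*l4+l1*l5+l2*l3+l2*l4+l2*l5+l3*l4+l3*l5+l4*l5) + (l3 - l5)^2) * z
    + (l1*l2*l3+l1*l2*l4+l1*l2*l5+l1*l3*l4+l1*l3*l5+l1*l4*l5+l2*l3*l4+l2*l3*l5+l2*l4*l5+l3*l4*l5)
    + (l1 + l2 + l3 + l4 + l5) * (l3^2 + l5^2)

theorem stmt16 (l1 l2 l3 l4 l5 : ℝ)
    (h12 : l1 ≥ l2) (h23 : l2 ≥ l3) (h34 : l3 ≥ l4) (h45 : l4 ≥ l5) (h5 : l5 ≥ -l1)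
    (he1 : l1 + l2 + l3 + l4 + l5 ≥ 0)
    (h3 : l3 > l1 + l2 + l3 + l4 + l5)
    (hQ : Qpoly l1 l2 l3 l4 l5 ((l1 + l2 + l3 + l4 + l5) / 2) = 0) :
    l1 - l2 - l3 + l4 - l5 > 0 := by
  unfold Qpoly at hQ
  by_contra h
  push_neg at h
  -- notations: a = l1, u = l2 - l3 ≥ 0, v = l4 - l5 ≥ 0
  -- H > 0, B = -(l1-l2-l3+l4-l5) ≥ 0
  have hH : -l1 - l2 + l3 - l4 - l5 > 0 := by linarith
  have ha : l1 ≥ 0 := by linarith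
  have hB : -(l1 - l2 - l3 + l4 - l5) ≥ 0 := by linarith
  have hau : l1 + l2 - l3 ≥ 0 := by linarith
  have hC : l1 - l2 + l3 - l4 + l5 ≥ 0 := by linarith
  have key : (-l1 - l2 + l3 - l4 - l5) * (l1 + l4 - l5) * (l1 + l2 - l3 + l4 - l5)
      + (-(l1 - l2 - l3 + l4 - l5)) * (l1 + l2 - l3) * (l1 - l2 + l3 - l4 + l5)
      + l1 * (-(l1 - l2 - l3 + l4 - l5)) * (-l1 - l2 + l3 - l4 - l5) = 0 := by
    linear_combination (-4 : ℝ) * hQ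
  rcases eq_or_lt_of_le (by linarith : (0:ℝ) ≤ l1 + l4 - l5) with hav | hav
  · -- l1 + l4 - l5 = 0 forces l1 = 0 and hence everything 0, contradicting hH
    have hl1 : l1 = 0 := by linarith
    linarith
  · have hauv : l1 + l2 - l3 + l4 - l5 > 0 := by linarith
    have T1 : (-l1 - l2 + l3 - l4 - l5) * (l1 + l4 - l5) * (l1 + l2 - l3 + l4 - l5) > 0 :=
      mul_pos (mul_pos hH hav) hauv
    have T2 : (-(l1 - l2 - l3 + l4 - l5)) * (l1 + l2 - l3) * (l1 - l2 + l3 - l4 + l5) ≥ 0 :=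
      mul_nonneg (mul_nonneg hB hau) hC
    have T3 : l1 * (-(l1 - l2 - l3 + l4 - l5)) * (-l1 - l2 + l3 - l4 - l5) ≥ 0 :=
      mul_nonneg (mul_nonneg ha hB) (le_of_lt hH)
    linarith
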